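/- Let s = (s_1,…,s_n) be a sequence of positive integers with s_n = 1. Then for every nonnegative integer i, ℓ^i(Par_s) = #{ r ∈ Ψ_n : des_s(r) = i }, i.e., the number of lattice points of Par_s whose last coordinate is i equals the number of elements of Ψ_n with exactly i s-descents. -/

import Mathlib

/-- The generator vectors of the s-lecture hall parallelepiped: `lhVec s j` has
`i`-th coordinate `s i` for `i ≥ j` and `0` for `i < j`. -/
def lhVec {n : ℕ} (s : Fin n → ℕ) (j : Fin n) : Fin n → ℝ :=
  fun i => if j ≤ i then (s i : ℝ) else 0

/-- The s-lecture hall parallelepiped: the half-open parallelepiped generated by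
the vectors `lhVec s j`. -/
def lhPar {n : ℕ} (s : Fin n → ℕ) : Set (Fin n → ℝ) :=
  {x | ∃ c : Fin n → ℝ, (∀ j, 0 ≤ c j ∧ c j < 1) ∧ x = ∑ j, c j • lhVec s j}

/-- `lhEll S i` is the number of lattice points of `S ⊆ ℝ^N` whose last coordinate
equals `i`. -/
noncomputable def lhEll {N : ℕ} (S : Set (Fin N → ℝ)) (i : ℕ) : ℕ :=
  Set.ncard {x : Fin N → ℤ | (fun k => (x k : ℝ)) ∈ S ∧
    ∀ j : Fin N, (j : ℕ) = N - 1 → x j = (i : ℤ)}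

/-- The number of s-descents of `r`: indices `i` with `r i / s i > r (i+1) / s (i+1)`. -/
noncomputable def sDes {N : ℕ} (s : Fin N → ℕ) (r : Fin N → ℤ) : ℕ :=
  Set.ncard {i : Fin N | ∃ h : (i : ℕ) + 1 < N,
    (r i : ℚ) / (s i : ℚ) > (r ⟨(i : ℕ) + 1, h⟩ : ℚ) / (s ⟨(i : ℕ) + 1, h⟩ : ℚ)}

/-- The number of s-ascents of `r`: indices `i` with `r i / s i < r (i+1) / s (i+1)`. -/
noncomputable def sAsc {N : ℕ} (s : Fin N → ℕ) (r : Fin N → ℤ) : ℕ :=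
  Set.ncard {i : Fin N | ∃ h : (i : ℕ) + 1 < N,
    (r i : ℚ) / (s i : ℚ) < (r ⟨(i : ℕ) + 1, h⟩ : ℚ) / (s ⟨(i : ℕ) + 1, h⟩ : ℚ)}

/-- The number of (regular) descents of `r`: indices `i` with `r i > r (i+1)`. -/
noncomputable def rDes {N : ℕ} (r : Fin N → ℤ) : ℕ :=
  Set.ncard {i : Fin N | ∃ h : (i : ℕ) + 1 < N, r ⟨(i : ℕ) + 1, h⟩ < r i}

/-- The number of (regular) ascents of `r`: indices `i` with `r i < r (i+1)`. -/
noncomputable def rAsc {N : ℕ} (r : Fin N → ℤ) : ℕ :=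
  Set.ncard {i : Fin N | ∃ h : (i : ℕ) + 1 < N, r i < r ⟨(i : ℕ) + 1, h⟩}

/-- The number of s-descents of `r` at positions strictly before position `i`. -/
noncomputable def sDesLt {N : ℕ} (s : Fin N → ℕ) (r : Fin N → ℤ) (i : Fin N) : ℕ :=
  Set.ncard {j : Fin N | (j : ℕ) < (i : ℕ) ∧ ∃ h : (j : ℕ) + 1 < N,
    (r j : ℚ) / (s j : ℚ) > (r ⟨(j : ℕ) + 1, h⟩ : ℚ) / (s ⟨(j : ℕ) + 1, h⟩ : ℚ)}

/-- `lhPsi s` is the set `Ψ_n = {0,…,s 0 − 1} × ⋯ × {0,…,s (n-1) − 1}`. -/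
def lhPsi {n : ℕ} (s : Fin n → ℕ) : Set (Fin n → ℤ) :=
  {r | ∀ i, 0 ≤ r i ∧ r i < (s i : ℤ)}

/-- `inDilate s t lam` says that the lattice point `lam` satisfies
`0 ≤ lam 0 / s 0 ≤ lam 1 / s 1 ≤ ⋯ ≤ lam (n-1) / s (n-1) ≤ t`,
i.e. lies in the `t`-th dilate of the s-lecture hall polytope. -/
def inDilate {n : ℕ} (s : Fin n → ℕ) (t : ℕ) (lam : Fin n → ℤ) : Prop :=
  (∀ i : Fin n, (i : ℕ) = 0 → 0 ≤ (lam i : ℚ) / (s i : ℚ)) ∧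
  (∀ i : Fin n, ∀ h : (i : ℕ) + 1 < n,
    (lam i : ℚ) / (s i : ℚ) ≤ (lam ⟨(i : ℕ) + 1, h⟩ : ℚ) / (s ⟨(i : ℕ) + 1, h⟩ : ℚ)) ∧
  (∀ i : Fin n, (i : ℕ) = n - 1 → (lam i : ℚ) / (s i : ℚ) ≤ (t : ℚ))

section Aux

variable {n : ℕ} (s : Fin n → ℕ)

lemma lh_Iic_zero (h0 : 0 < n) : Finset.Iic (⟨0, h0⟩ : Fin n) = {⟨0, h0⟩} := by
  ext j; simp only [Finset.mem_Iic, Finset.mem_singleton, Fin.le_def, Fin.ext_iff]; omega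

lemma lh_Iic_succ (k : ℕ) (hk : k + 1 < n) :
    Finset.Iic (⟨k + 1, hk⟩ : Fin n) =
      insert ⟨k + 1, hk⟩ (Finset.Iic ⟨k, by omega⟩) := by
  ext j; simp [Fin.le_def, Fin.ext_iff]; omega

lemma lh_not_mem_Iic (k : ℕ) (hk : k + 1 < n) :
    (⟨k + 1, hk⟩ : Fin n) ∉ Finset.Iic (⟨k, by omega⟩ : Fin n) := by
  simp [Fin.le_def]

lemma lh_sum_coord (c : Fin n → ℝ) (i : Fin n) :
    (∑ j, c j • lhVec s j) i = (s i : ℝ) * ∑ j ∈ Finset.Iic i, c j := by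
  have : ∀ j : Fin n, (c j • lhVec s j) i = if j ≤ i then c j * (s i : ℝ) else 0 := by
    intro j; simp [lhVec, mul_ite]
  rw [Finset.sum_apply, Finset.sum_congr rfl (fun j _ => this j), ← Finset.sum_filter]
  have : Finset.filter (fun j => j ≤ i) Finset.univ = Finset.Iic i := by
    ext j; simp
  rw [this, Finset.mul_sum]
  exact Finset.sum_congr rfl (fun j _ => mul_comm _ _)

lemma lh_cast_le (a b : ℤ) (p q : ℕ) (hp : 0 < p) (hq : 0 < q) :
    (a : ℚ) / (p : ℚ) ≤ (b : ℚ) / (q : ℚ) ↔ (a : ℝ) / (p : ℝ) ≤ (b : ℝ) / (q : ℝ) := by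
  have hp' : (0:ℚ) < p := by exact_mod_cast hp
  have hq' : (0:ℚ) < q := by exact_mod_cast hq
  have hp'' : (0:ℝ) < p := by exact_mod_cast hp
  have hq'' : (0:ℝ) < q := by exact_mod_cast hq
  rw [div_le_div_iff₀ hp' hq', div_le_div_iff₀ hp'' hq'']
  constructor <;> intro h <;> exact_mod_cast h

lemma lh_cast_lt (a b : ℤ) (p q : ℕ) (hp : 0 < p) (hq : 0 < q) :
    (a : ℚ) / (p : ℚ) < (b : ℚ) / (q : ℚ) ↔ (a : ℝ) / (p : ℝ) < (b : ℝ) / (q : ℝ) := by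
  have hp' : (0:ℚ) < p := by exact_mod_cast hp
  have hq' : (0:ℚ) < q := by exact_mod_cast hq
  have hp'' : (0:ℝ) < p := by exact_mod_cast hp
  have hq'' : (0:ℝ) < q := by exact_mod_cast hq
  rw [div_lt_div_iff₀ hp' hq', div_lt_div_iff₀ hp'' hq'']
  constructor <;> intro h <;> exact_mod_cast h

/-- The integer/rational description of lattice points of `lhPar`. -/
def lhPq (hn : 0 < n) (lam : Fin n → ℤ) : Prop :=
  (0 ≤ lam ⟨0, hn⟩ ∧ lam ⟨0, hn⟩ < (s ⟨0, hn⟩ : ℤ)) ∧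
  ∀ i : Fin n, ∀ h : (i : ℕ) + 1 < n,
    (lam i : ℚ) / (s i : ℚ) ≤ (lam ⟨(i:ℕ)+1, h⟩ : ℚ) / (s ⟨(i:ℕ)+1, h⟩ : ℚ) ∧
    (lam ⟨(i:ℕ)+1, h⟩ : ℚ) / (s ⟨(i:ℕ)+1, h⟩ : ℚ) < (lam i : ℚ) / (s i : ℚ) + 1

lemma lh_div_add_one {K : Type*} [DivisionRing K] [CharZero K] (a : ℤ) (p : ℕ) (hp : 0 < p) :
    (a : K) / (p : K) + 1 = ((a + (p:ℤ) : ℤ) : K) / (p : K) := by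
  have : (p : K) ≠ 0 := by exact_mod_cast hp.ne'
  push_cast
  rw [add_div, div_self this]

lemma lh_mem_iff (hn : 0 < n) (hs : ∀ i, 0 < s i) (lam : Fin n → ℤ) :
    ((fun k => (lam k : ℝ)) ∈ lhPar s) ↔ lhPq s hn lam := by
  have hsR : ∀ i : Fin n, (0:ℝ) < (s i : ℝ) := fun i => by exact_mod_cast hs i
  constructor
  · rintro ⟨c, hc, hx⟩
    have hT' : ∀ i : Fin n, ∑ j ∈ Finset.Iic i, c j = (lam i : ℝ) / (s i : ℝ) := by
      intro i
      have h1 : (lam i : ℝ) = (s i : ℝ) * ∑ j ∈ Finset.Iic i, c j := by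
        have := congrFun hx i
        rw [lh_sum_coord] at this
        simpa using this
      rw [eq_div_iff (hsR i).ne']
      linarith [h1]
    constructor
    · have h0 : c ⟨0, hn⟩ = (lam ⟨0, hn⟩ : ℝ) / (s ⟨0, hn⟩ : ℝ) := by
        rw [← hT' ⟨0, hn⟩, lh_Iic_zero hn, Finset.sum_singleton]
      obtain ⟨hc0, hc1⟩ := hc ⟨0, hn⟩
      rw [h0] at hc0 hc1
      constructor
      · have : (0:ℝ) ≤ (lam ⟨0, hn⟩ : ℝ) := by
          have h2 := mul_nonneg hc0 (hsR ⟨0, hn⟩).le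
          rwa [div_mul_cancel₀ _ (hsR ⟨0, hn⟩).ne'] at h2
        exact_mod_cast this
      · have : (lam ⟨0, hn⟩ : ℝ) < (s ⟨0, hn⟩ : ℝ) := (div_lt_one (hsR _)).mp hc1
        exact_mod_cast this
    · intro i h
      have hstep : (lam ⟨(i:ℕ)+1, h⟩ : ℝ) / (s ⟨(i:ℕ)+1, h⟩ : ℝ)
          = (lam i : ℝ) / (s i : ℝ) + c ⟨(i:ℕ)+1, h⟩ := by
        rw [← hT' i, ← hT' ⟨(i:ℕ)+1, h⟩, lh_Iic_succ (i:ℕ) h,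
          Finset.sum_insert (lh_not_mem_Iic (i:ℕ) h)]
        have : (⟨(i:ℕ), by omega⟩ : Fin n) = i := Fin.eta i i.isLt
        rw [this]; ring
      obtain ⟨hc0, hc1⟩ := hc ⟨(i:ℕ)+1, h⟩
      constructor
      · rw [lh_cast_le _ _ _ _ (hs i) (hs ⟨(i:ℕ)+1, h⟩)]
        rw [hstep]; linarith
      · rw [lh_div_add_one _ _ (hs i), lh_cast_lt _ _ _ _ (hs ⟨(i:ℕ)+1, h⟩) (hs i),
          ← lh_div_add_one _ _ (hs i)]
        rw [hstep]; linarith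
  · rintro ⟨⟨h0a, h0b⟩, hmid⟩
    classical
    set c : Fin n → ℝ := fun j =>
      if hj : (j:ℕ) = 0 then (lam j : ℝ) / (s j : ℝ)
      else (lam j : ℝ) / (s j : ℝ) -
        (lam ⟨(j:ℕ)-1, lt_of_le_of_lt (Nat.sub_le _ _) j.isLt⟩ : ℝ) /
        (s ⟨(j:ℕ)-1, lt_of_le_of_lt (Nat.sub_le _ _) j.isLt⟩ : ℝ) with hcdef
    have key : ∀ k, ∀ hk : k < n,
        ∑ j ∈ Finset.Iic (⟨k, hk⟩ : Fin n), c j = (lam ⟨k, hk⟩ : ℝ) / (s ⟨k, hk⟩ : ℝ) := by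
      intro k
      induction k with
      | zero =>
        intro hk
        rw [lh_Iic_zero hk, Finset.sum_singleton, hcdef]
        simp
      | succ m ih =>
        intro hk
        rw [lh_Iic_succ m hk, Finset.sum_insert (lh_not_mem_Iic m hk), ih (by omega)]
        have hc1 : c ⟨m+1, hk⟩ = (lam ⟨m+1, hk⟩ : ℝ) / (s ⟨m+1, hk⟩ : ℝ) -
            (lam ⟨m, by omega⟩ : ℝ) / (s ⟨m, by omega⟩ : ℝ) := by
          rw [hcdef]
          simp only []
          rw [dif_neg (by simp)]
          rfl
        rw [hc1]
        ring
    refine ⟨c, ?_, ?_⟩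
    · intro j
      by_cases hj : (j:ℕ) = 0
      · have hje : j = ⟨0, hn⟩ := Fin.ext hj
        have : c j = (lam j : ℝ) / (s j : ℝ) := by rw [hcdef]; simp only []; rw [dif_pos hj]
        rw [this, hje]
        constructor
        · apply div_nonneg _ (hsR _).le
          exact_mod_cast h0a
        · rw [div_lt_one (hsR _)]
          exact_mod_cast h0b
      · have hj1 : ((j:ℕ) - 1) + 1 < n := by omega
        set i : Fin n := ⟨(j:ℕ)-1, lt_of_le_of_lt (Nat.sub_le _ _) j.isLt⟩ with hi
        have hje : (⟨(i:ℕ)+1, hj1⟩ : Fin n) = j := by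
          apply Fin.ext; simp [hi]; omega
        obtain ⟨hm1, hm2⟩ := hmid i hj1
        rw [hje] at hm1 hm2
        rw [lh_cast_le _ _ _ _ (hs i) (hs j)] at hm1
        rw [lh_div_add_one _ _ (hs i), lh_cast_lt _ _ _ _ (hs j) (hs i),
          ← lh_div_add_one _ _ (hs i)] at hm2
        have : c j = (lam j : ℝ) / (s j : ℝ) - (lam i : ℝ) / (s i : ℝ) := by
          rw [hcdef]; simp only []; rw [dif_neg hj]
        rw [this]
        constructor <;> linarith
    · funext idx
      rw [lh_sum_coord]
      have := key (idx:ℕ) idx.isLt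
      rw [Fin.eta] at this
      rw [this, mul_div_cancel₀ _ (hsR idx).ne']

noncomputable def lhPhi (r : Fin n → ℤ) : Fin n → ℤ :=
  fun i => r i + (s i : ℤ) * (sDesLt s r i : ℤ)

lemma lh_sDesLt_zero (r : Fin n → ℤ) (hn : 0 < n) : sDesLt s r ⟨0, hn⟩ = 0 := by
  unfold sDesLt
  rw [Set.ncard_eq_zero (Set.toFinite _)]
  ext j; simp

lemma lh_sDesLt_succ (r : Fin n → ℤ) (k : ℕ) (hk : k + 1 < n) :
    sDesLt s r ⟨k+1, hk⟩ =
      sDesLt s r ⟨k, by omega⟩ +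
      if (r ⟨k+1, hk⟩ : ℚ) / (s ⟨k+1, hk⟩ : ℚ) < (r ⟨k, by omega⟩ : ℚ) / (s ⟨k, by omega⟩ : ℚ)
      then 1 else 0 := by
  classical
  unfold sDesLt
  by_cases hd : (r ⟨k+1, hk⟩ : ℚ) / (s ⟨k+1, hk⟩ : ℚ)
      < (r ⟨k, by omega⟩ : ℚ) / (s ⟨k, by omega⟩ : ℚ)
  · rw [if_pos hd]
    have hset : {j : Fin n | (j : ℕ) < ((⟨k+1, hk⟩ : Fin n) : ℕ) ∧ ∃ h : (j : ℕ) + 1 < n,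
        (r j : ℚ) / (s j : ℚ) > (r ⟨(j : ℕ) + 1, h⟩ : ℚ) / (s ⟨(j : ℕ) + 1, h⟩ : ℚ)} =
        insert (⟨k, by omega⟩ : Fin n) {j : Fin n | (j : ℕ) < ((⟨k, by omega⟩ : Fin n) : ℕ) ∧
          ∃ h : (j : ℕ) + 1 < n,
          (r j : ℚ) / (s j : ℚ) > (r ⟨(j : ℕ) + 1, h⟩ : ℚ) / (s ⟨(j : ℕ) + 1, h⟩ : ℚ)} := by
      ext j
      simp only [Set.mem_setOf_eq, Set.mem_insert_iff]
      constructor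
      · rintro ⟨hlt, hD⟩
        rcases Nat.lt_succ_iff_lt_or_eq.mp hlt with h | h
        · exact Or.inr ⟨h, hD⟩
        · exact Or.inl (Fin.ext h)
      · rintro (rfl | ⟨hlt, hD⟩)
        · exact ⟨Nat.lt_succ_self k, ⟨hk, hd⟩⟩
        · exact ⟨Nat.lt_succ_of_lt hlt, hD⟩
    rw [hset, Set.ncard_insert_of_notMem (by simp) (Set.toFinite _)]
  · rw [if_neg hd, add_zero]
    congr 1
    ext j
    simp only [Set.mem_setOf_eq]
    constructor
    · rintro ⟨hlt, hD⟩
      rcases Nat.lt_succ_iff_lt_or_eq.mp hlt with h | h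
      · exact ⟨h, hD⟩
      · subst h
        obtain ⟨h', hineq⟩ := hD
        exact absurd hineq hd
    · rintro ⟨hlt, hD⟩
      exact ⟨Nat.lt_succ_of_lt hlt, hD⟩

lemma lh_sDes_eq (r : Fin n → ℤ) (hn : 0 < n) :
    sDes s r = sDesLt s r ⟨n - 1, Nat.sub_lt hn Nat.one_pos⟩ := by
  unfold sDes sDesLt
  congr 1
  ext j
  simp only [Set.mem_setOf_eq]
  constructor
  · rintro ⟨h, hi⟩
    exact ⟨by omega, h, hi⟩
  · rintro ⟨_, h, hi⟩
    exact ⟨h, hi⟩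

lemma lh_phi_div (hs : ∀ i, 0 < s i) (r : Fin n → ℤ) (i : Fin n) :
    (lhPhi s r i : ℚ) / (s i : ℚ) = (r i : ℚ) / (s i : ℚ) + (sDesLt s r i : ℚ) := by
  have h : (s i : ℚ) ≠ 0 := by exact_mod_cast (hs i).ne'
  unfold lhPhi
  push_cast
  field_simp

lemma lh_frac_bounds (hs : ∀ i, 0 < s i) (r : Fin n → ℤ) (hr : r ∈ lhPsi s) (i : Fin n) :
    0 ≤ (r i : ℚ) / (s i : ℚ) ∧ (r i : ℚ) / (s i : ℚ) < 1 := by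
  have h : (0:ℚ) < (s i : ℚ) := by exact_mod_cast hs i
  constructor
  · apply div_nonneg _ h.le
    exact_mod_cast (hr i).1
  · rw [div_lt_one h]
    exact_mod_cast (hr i).2

lemma lh_phi_Pq (hn : 0 < n) (hs : ∀ i, 0 < s i) (r : Fin n → ℤ) (hr : r ∈ lhPsi s) :
    lhPq s hn (lhPhi s r) := by
  constructor
  · have h0 : sDesLt s r ⟨0, hn⟩ = 0 := lh_sDesLt_zero s r hn
    have : lhPhi s r ⟨0, hn⟩ = r ⟨0, hn⟩ := by
      unfold lhPhi; rw [h0]; push_cast; ring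
    rw [this]
    exact hr ⟨0, hn⟩
  · intro i h
    have hrec : sDesLt s r ⟨(i:ℕ)+1, h⟩ = sDesLt s r i +
        if (r ⟨(i:ℕ)+1, h⟩ : ℚ) / (s ⟨(i:ℕ)+1, h⟩ : ℚ) < (r i : ℚ) / (s i : ℚ)
        then 1 else 0 := by
      have := lh_sDesLt_succ s r (i:ℕ) h
      simpa using this
    obtain ⟨ha0, ha1⟩ := lh_frac_bounds s hs r hr i
    obtain ⟨hb0, hb1⟩ := lh_frac_bounds s hs r hr ⟨(i:ℕ)+1, h⟩
    rw [lh_phi_div s hs, lh_phi_div s hs, hrec]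
    by_cases hd : (r ⟨(i:ℕ)+1, h⟩ : ℚ) / (s ⟨(i:ℕ)+1, h⟩ : ℚ) < (r i : ℚ) / (s i : ℚ)
    · rw [if_pos hd]
      push_cast
      constructor <;> linarith
    · rw [if_neg hd]
      have := not_lt.mp hd
      push_cast
      constructor <;> linarith

lemma lh_phi_last (hn : 0 < n) (r : Fin n → ℤ) (hr : r ∈ lhPsi s)
    (hlast : s ⟨n - 1, Nat.sub_lt hn Nat.one_pos⟩ = 1) :
    lhPhi s r ⟨n - 1, Nat.sub_lt hn Nat.one_pos⟩ = (sDes s r : ℤ) := by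
  have h1 := hr ⟨n - 1, by omega⟩
  rw [hlast] at h1
  have h2 : r ⟨n - 1, by omega⟩ = 0 := by omega
  unfold lhPhi
  rw [h2, hlast, lh_sDes_eq s r hn]
  push_cast
  ring

lemma lh_phi_mod (hs : ∀ i, 0 < s i) (r : Fin n → ℤ) (hr : r ∈ lhPsi s) (i : Fin n) :
    lhPhi s r i % (s i : ℤ) = r i := by
  unfold lhPhi
  rw [Int.add_mul_emod_self_left]
  exact Int.emod_eq_of_lt (hr i).1 (hr i).2

lemma lh_surj (hn : 0 < n) (hs : ∀ i, 0 < s i) (lam : Fin n → ℤ) (hPq : lhPq s hn lam) :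
    ∃ r ∈ lhPsi s, lhPhi s r = lam ∧
      (sDesLt s r ⟨n - 1, Nat.sub_lt hn Nat.one_pos⟩ : ℤ) = lam ⟨n - 1, Nat.sub_lt hn Nat.one_pos⟩ / (s ⟨n - 1, Nat.sub_lt hn Nat.one_pos⟩ : ℤ) := by
  have hsZ : ∀ j : Fin n, (0:ℤ) < (s j : ℤ) := fun j => by exact_mod_cast hs j
  set r : Fin n → ℤ := fun j => lam j % (s j : ℤ) with hrdef
  have hr : r ∈ lhPsi s := fun j =>
    ⟨Int.emod_nonneg _ (hsZ j).ne', Int.emod_lt_of_pos _ (hsZ j)⟩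
  have hdecomp : ∀ j : Fin n, lam j = (s j : ℤ) * (lam j / (s j : ℤ)) + r j :=
    fun j => (Int.mul_ediv_add_emod _ _).symm
  have hlamdiv : ∀ j : Fin n, (lam j : ℚ) / (s j : ℚ)
      = ((lam j / (s j : ℤ) : ℤ) : ℚ) + (r j : ℚ) / (s j : ℚ) := by
    intro j
    have hq : (s j : ℚ) ≠ 0 := by exact_mod_cast (hs j).ne'
    have h1 : ((lam j : ℚ)) = (s j : ℚ) * ((lam j / (s j : ℤ) : ℤ) : ℚ) + (r j : ℚ) := by
      exact_mod_cast hdecomp j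
    rw [h1]
    field_simp
  have key : ∀ k, ∀ hk : k < n,
      (sDesLt s r ⟨k, hk⟩ : ℤ) = lam ⟨k, hk⟩ / (s ⟨k, hk⟩ : ℤ) := by
    intro k
    induction k with
    | zero =>
      intro hk
      rw [lh_sDesLt_zero s r hk]
      symm
      push_cast
      exact Int.ediv_eq_zero_of_lt hPq.1.1 hPq.1.2
    | succ m ih =>
      intro hk
      have hk' : m < n := by omega
      obtain ⟨hm1, hm2⟩ := hPq.2 ⟨m, hk'⟩ hk
      rw [hlamdiv, hlamdiv] at hm1 hm2
      obtain ⟨fa0, fa1⟩ := lh_frac_bounds s hs r hr ⟨m, hk'⟩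
      obtain ⟨fb0, fb1⟩ := lh_frac_bounds s hs r hr ⟨m+1, hk⟩
      rw [lh_sDesLt_succ s r m hk]
      by_cases hd : (r ⟨m+1, hk⟩ : ℚ) / (s ⟨m+1, hk⟩ : ℚ)
          < (r ⟨m, by omega⟩ : ℚ) / (s ⟨m, by omega⟩ : ℚ)
      · rw [if_pos hd]
        push_cast
        rw [ih hk']
        have h1 : ((lam ⟨m, hk'⟩ / (s ⟨m, hk'⟩ : ℤ) : ℤ) : ℚ)
            < ((lam ⟨m+1, hk⟩ / (s ⟨m+1, hk⟩ : ℤ) : ℤ) : ℚ) := by linarith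
        have h2 : ((lam ⟨m+1, hk⟩ / (s ⟨m+1, hk⟩ : ℤ) : ℤ) : ℚ)
            < ((lam ⟨m, hk'⟩ / (s ⟨m, hk'⟩ : ℤ) : ℤ) : ℚ) + 2 := by linarith
        have h1' : lam ⟨m, hk'⟩ / (s ⟨m, hk'⟩ : ℤ) < lam ⟨m+1, hk⟩ / (s ⟨m+1, hk⟩ : ℤ) := by
          exact_mod_cast h1
        have h2' : lam ⟨m+1, hk⟩ / (s ⟨m+1, hk⟩ : ℤ) < lam ⟨m, hk'⟩ / (s ⟨m, hk'⟩ : ℤ) + 2 := by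
          exact_mod_cast h2
        omega
      · rw [if_neg hd]
        have hd' := not_lt.mp hd
        push_cast
        rw [ih hk']
        have h1 : ((lam ⟨m+1, hk⟩ / (s ⟨m+1, hk⟩ : ℤ) : ℤ) : ℚ)
            < ((lam ⟨m, hk'⟩ / (s ⟨m, hk'⟩ : ℤ) : ℤ) : ℚ) + 1 := by linarith
        have h2 : ((lam ⟨m, hk'⟩ / (s ⟨m, hk'⟩ : ℤ) : ℤ) : ℚ)
            < ((lam ⟨m+1, hk⟩ / (s ⟨m+1, hk⟩ : ℤ) : ℤ) : ℚ) + 1 := by linarith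
        have h1' : lam ⟨m+1, hk⟩ / (s ⟨m+1, hk⟩ : ℤ) < lam ⟨m, hk'⟩ / (s ⟨m, hk'⟩ : ℤ) + 1 := by
          exact_mod_cast h1
        have h2' : lam ⟨m, hk'⟩ / (s ⟨m, hk'⟩ : ℤ) < lam ⟨m+1, hk⟩ / (s ⟨m+1, hk⟩ : ℤ) + 1 := by
          exact_mod_cast h2
        omega
  refine ⟨r, hr, ?_, key (n-1) (by omega)⟩
  funext j
  have hkey := key (j:ℕ) j.isLt
  rw [Fin.eta] at hkey
  show r j + (s j : ℤ) * (sDesLt s r j : ℤ) = lam j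
  rw [hkey]
  linarith [hdecomp j]

end Aux

/-- if `s_n = 1`, then `ℓ^i(Par_s) = #{r ∈ Ψ_n : des_s(r) = i}`. -/
theorem stmt_7 (n : ℕ) (hn : 0 < n) (s : Fin n → ℕ) (hs : ∀ i, 0 < s i)
    (hlast : s ⟨n - 1, by omega⟩ = 1) (i : ℕ) :
    lhEll (lhPar s) i = Set.ncard {r ∈ lhPsi s | sDes s r = i} := by
  classical
  have hA : {x : Fin n → ℤ | (fun k => (x k : ℝ)) ∈ lhPar s ∧
      ∀ j : Fin n, (j : ℕ) = n - 1 → x j = (i : ℤ)}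
      = lhPhi s '' {r ∈ lhPsi s | sDes s r = i} := by
    ext lam
    simp only [Set.mem_setOf_eq, Set.mem_image, Set.sep_setOf]
    constructor
    · rintro ⟨hmem, hlastc⟩
      rw [lh_mem_iff s hn hs] at hmem
      obtain ⟨r, hr, hphi, hcount⟩ := lh_surj s hn hs lam hmem
      refine ⟨r, ⟨hr, ?_⟩, hphi⟩
      have h1 : lam ⟨n - 1, by omega⟩ = (i : ℤ) := hlastc ⟨n - 1, by omega⟩ rfl
      have h2 : (s ⟨n - 1, by omega⟩ : ℤ) = 1 := by exact_mod_cast hlast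
      rw [h1, h2, Int.ediv_one] at hcount
      rw [lh_sDes_eq s r hn]
      exact_mod_cast hcount
    · rintro ⟨r, ⟨hr, hdes⟩, rfl⟩
      refine ⟨?_, ?_⟩
      · rw [lh_mem_iff s hn hs]
        exact lh_phi_Pq s hn hs r hr
      · intro j hj
        have hje : j = ⟨n - 1, by omega⟩ := Fin.ext hj
        rw [hje, lh_phi_last s hn r hr hlast, hdes]
  have hinj : Set.InjOn (lhPhi s) {r ∈ lhPsi s | sDes s r = i} := by
    intro r1 h1 r2 h2 heq
    funext j
    calc r1 j = lhPhi s r1 j % (s j : ℤ) := (lh_phi_mod s hs r1 h1.1 j).symm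
    _ = lhPhi s r2 j % (s j : ℤ) := by rw [heq]
    _ = r2 j := lh_phi_mod s hs r2 h2.1 j
  unfold lhEll
  rw [hA, Set.ncard_image_of_injOn hinj]
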